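/- arXiv:1607.02844 — 4 statements merged into one kernel-verified Lean document; each statement's English description precedes it below -/
import Mathlib

section
/- Let V be a group and π : V → A6 a surjective group homomorphism whose kernel is a central subgroup of V of order 3, and for a tuple (g_1,…,g_k) of order-2 elements of A6 let γ(g_1,…,g_k) := ĝ_1 ĝ_2 ⋯ ĝ_k ∈ V, where ĝ_i is the canonical order-2 lift of g_i. Then γ is invariant under the Hurwitz moves: if (h_1,…,h_k) is obtained from (g_1,…,g_k) by a Hurwitz move, then γ(h_1,…,h_k) = γ(g_1,…,g_k). -/
/-- The `i`-th Hurwitz move on `k`-tuples of elements of a group `G`: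
`(g₁,…,gₖ) ↦ (g₁,…,g_{i-1}, g_{i+1}, g_{i+1}⁻¹ g_i g_{i+1}, g_{i+2},…,gₖ)`. -/
def HurwitzMove {G : Type*} [Group G] {k : ℕ} (g h : Fin k → G) : Prop :=
  ∃ i : ℕ, ∃ hi : i + 1 < k,
    h ⟨i, Nat.lt_of_succ_lt hi⟩ = g ⟨i + 1, hi⟩ ∧
    h ⟨i + 1, hi⟩ = (g ⟨i + 1, hi⟩)⁻¹ * g ⟨i, Nat.lt_of_succ_lt hi⟩ * g ⟨i + 1, hi⟩ ∧
    ∀ j : Fin k, (j : ℕ) ≠ i → (j : ℕ) ≠ i + 1 → h j = g j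

/-- Hurwitz equivalence: the equivalence relation generated by the Hurwitz moves. -/
def HurwitzEquiv {G : Type*} [Group G] {k : ℕ} (g h : Fin k → G) : Prop :=
  Relation.EqvGen HurwitzMove g h

/-- The Nielsen class `Ni(A₆, C_{2×2}^k)`: `k`-tuples of order-2 elements of `A₆`
(products of two disjoint transpositions) with product `1` generating `A₆`. -/
def NielsenSet (k : ℕ) : Set (Fin k → Equiv.Perm (Fin 6)) :=
  {g | (∀ i, g i ∈ alternatingGroup (Fin 6)) ∧ (∀ i, orderOf (g i) = 2) ∧
       (List.ofFn g).prod = 1 ∧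
       Subgroup.closure (Set.range g) = alternatingGroup (Fin 6)}

/-- One step of the absolute equivalence: a Hurwitz move, or simultaneous
conjugation of all entries by a single element of `S₆`. -/
def AbsRel (k : ℕ) (g h : Fin k → Equiv.Perm (Fin 6)) : Prop :=
  HurwitzMove g h ∨ ∃ s : Equiv.Perm (Fin 6), h = fun i => s⁻¹ * g i * s

/-- One step of the inner equivalence: a Hurwitz move, or simultaneous
conjugation of all entries by a single element of `A₆`. -/
def InnerRel (k : ℕ) (g h : Fin k → Equiv.Perm (Fin 6)) : Prop :=
  HurwitzMove g h ∨
    ∃ s ∈ alternatingGroup (Fin 6), h = fun i => s⁻¹ * g i * s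

/-- The set of fixed points of a permutation. -/
def FixedPts {n : ℕ} (g : Equiv.Perm (Fin n)) : Set (Fin n) := {x | g x = x}


private lemma orderOf_conj' {G : Type*} [Group G] (x c : G) :
    orderOf (c⁻¹ * x * c⁻¹⁻¹) = orderOf x := by
  have h : c⁻¹ * x * c⁻¹⁻¹ = (MulAut.conj c⁻¹) x := by
    simp [MulAut.conj]
  rw [h]
  exact orderOf_injective (MulAut.conj c⁻¹).toMonoidHom (MulAut.conj c⁻¹).injective x

private lemma prod_ofFn_two_swap {M : Type*} [Monoid M] :
    ∀ (i : ℕ) {k : ℕ} (f f' : Fin k → M) (hi : i + 1 < k),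
    (∀ j : Fin k, (j : ℕ) ≠ i → (j : ℕ) ≠ i + 1 → f' j = f j) →
    f' ⟨i, Nat.lt_of_succ_lt hi⟩ * f' ⟨i + 1, hi⟩ =
      f ⟨i, Nat.lt_of_succ_lt hi⟩ * f ⟨i + 1, hi⟩ →
    (List.ofFn f').prod = (List.ofFn f).prod := by
  intro i
  induction i with
  | zero =>
    intro k f f' hi hrest hprod
    obtain ⟨n, rfl⟩ : ∃ n, k = n + 2 := ⟨k - 2, by omega⟩
    have hrest2 : (List.ofFn fun j : Fin n => f' j.succ.succ).prod =
        (List.ofFn fun j : Fin n => f j.succ.succ).prod := by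
      have hfun : (fun j : Fin n => f' j.succ.succ) = fun j => f j.succ.succ :=
        funext fun j => hrest j.succ.succ (by simp [Fin.val_succ]) (by simp [Fin.val_succ])
      rw [hfun]
    rw [List.ofFn_succ, List.ofFn_succ, List.prod_cons, List.prod_cons,
        List.ofFn_succ, List.ofFn_succ, List.prod_cons, List.prod_cons,
        ← mul_assoc, ← mul_assoc, hrest2]
    congr 1
  | succ i ih =>
    intro k f f' hi hrest hprod
    obtain ⟨m, rfl⟩ : ∃ m, k = m + 1 := ⟨k - 1, by omega⟩
    rw [List.ofFn_succ, List.ofFn_succ, List.prod_cons, List.prod_cons,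
        hrest 0 (by simp) (by simp)]
    congr 1
    refine ih (fun j => f j.succ) (fun j => f' j.succ) (by omega)
      (fun j h1 h2 => hrest j.succ (by simp [Fin.val_succ]; omega)
        (by simp [Fin.val_succ]; omega)) ?_
    exact hprod

/-- The lifting invariant `γ(g₁,…,g_k) = ĝ₁⋯ĝ_k` (product of canonical order-2
lifts to a central triple cover `V` of `A₆`) is invariant under Hurwitz moves. -/
theorem stmt_5 {V : Type*} [Group V] (π : V →* ↥(alternatingGroup (Fin 6)))
    (hsurj : Function.Surjective π)
    (hcent : π.ker ≤ Subgroup.center V)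
    (hker : Nat.card π.ker = 3)
    (lift : ↥(alternatingGroup (Fin 6)) → V)
    (hlift : ∀ x, orderOf x = 2 → π (lift x) = x ∧ orderOf (lift x) = 2)
    {k : ℕ} (g h : Fin k → ↥(alternatingGroup (Fin 6)))
    (hg : ∀ i, orderOf (g i) = 2)
    (hmove : HurwitzMove g h) :
    (List.ofFn fun i => lift (h i)).prod = (List.ofFn fun i => lift (g i)).prod := by

  -- uniqueness of the order-2 lift
  have huniq : ∀ x, orderOf x = 2 → ∀ v : V, π v = x → orderOf v = 2 → v = lift x := by
    intro x hx v hv hvord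
    obtain ⟨hπl, hlord⟩ := hlift x hx
    set z := v * (lift x)⁻¹ with hz
    have hzker : z ∈ π.ker := by
      simp [MonoidHom.mem_ker, hz, hv, hπl]
    have hzc : z ∈ Subgroup.center V := hcent hzker
    have hv2 : v ^ 2 = 1 := by rw [← hvord]; exact pow_orderOf_eq_one v
    have hl2 : (lift x) ^ 2 = 1 := by rw [← hlord]; exact pow_orderOf_eq_one (lift x)
    have hveq : v = z * lift x := by rw [hz]; group
    have hz2 : z ^ 2 = 1 := by
      have : v ^ 2 = z ^ 2 * (lift x) ^ 2 := by
        rw [hveq]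
        have hc := (Subgroup.mem_center_iff.mp hzc (lift x)).symm
        rw [pow_two, pow_two, pow_two]
        rw [mul_assoc, ← mul_assoc (lift x) z (lift x), ← hc]
        group
      rw [hv2, hl2, mul_one] at this
      exact this.symm
    have hz3 : z ^ 3 = 1 := by
      have : (⟨z, hzker⟩ : π.ker) ^ 3 = 1 := by
        rw [← hker]; exact pow_card_eq_one'
      have := congrArg (Subgroup.subtype π.ker) this
      simpa using this
    have hz1 : z = 1 := by
      have : z = z ^ 3 * (z ^ 2)⁻¹ := by group
      rw [hz2, hz3] at this; simpa using this
    rw [hveq, hz1, one_mul]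
  obtain ⟨i, hi, h1, h2, h3⟩ := hmove
  set a := g ⟨i, Nat.lt_of_succ_lt hi⟩ with ha
  set b := g ⟨i + 1, hi⟩ with hb
  have hao : orderOf a = 2 := hg _
  have hbo : orderOf b = 2 := hg _
  obtain ⟨hπa, hla⟩ := hlift a hao
  obtain ⟨hπb, hlb⟩ := hlift b hbo
  have hconjord : orderOf (b⁻¹ * a * b) = 2 := by
    have : b⁻¹ * a * b = b⁻¹ * a * b⁻¹⁻¹ := by group
    rw [this, orderOf_conj']; exact hao
  have hliftconj : lift (b⁻¹ * a * b) = (lift b)⁻¹ * lift a * lift b := by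
    refine (huniq _ hconjord _ ?_ ?_).symm
    · simp [map_mul, map_inv, hπa, hπb]
    · have : (lift b)⁻¹ * lift a * lift b = (lift b)⁻¹ * lift a * (lift b)⁻¹⁻¹ := by group
      rw [this, orderOf_conj']; exact hla
  refine prod_ofFn_two_swap i (fun j => lift (g j)) (fun j => lift (h j)) hi
    (fun j hj1 hj2 => by show lift (h j) = lift (g j); rw [h3 j hj1 hj2]) ?_
  show lift (h ⟨i, _⟩) * lift (h ⟨i + 1, hi⟩) = lift (g ⟨i, _⟩) * lift (g ⟨i + 1, hi⟩)
  rw [h1, h2, ← ha, ← hb, hliftconj]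
  group
end

section
/- Let V be a group and π : V → A6 a surjective group homomorphism whose kernel is a central subgroup of V of order 3, and for a tuple (g_1,…,g_k) of order-2 elements of A6 let γ(g_1,…,g_k) := ĝ_1 ĝ_2 ⋯ ĝ_k ∈ V, where ĝ_i is the canonical order-2 lift of g_i. If g_1 g_2 ⋯ g_k = 1, then for every t ∈ A6 one has γ(t^{-1} g_1 t, …, t^{-1} g_k t) = γ(g_1,…,g_k); that is, the lifting invariant is invariant under the inner action (simultaneous conjugation by elements of A6). -/
private lemma conj_orderOf {G : Type*} [Group G] (s x : G) :
    orderOf (s⁻¹ * x * s) = orderOf x := by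
  have := (MulAut.conj s⁻¹).orderOf_eq x
  rw [MulAut.conj_apply, inv_inv] at this
  exact this

/-- If `g₁ ⋯ g_k = 1`, the lifting invariant `γ(g₁,…,g_k) = ĝ₁⋯ĝ_k` (product of
canonical order-2 lifts to a central triple cover `V` of `A₆`) is invariant
under simultaneous conjugation by any `t ∈ A₆` (the inner action). -/
theorem stmt_6 {V : Type*} [Group V] (π : V →* ↥(alternatingGroup (Fin 6)))
    (hsurj : Function.Surjective π)
    (hcent : π.ker ≤ Subgroup.center V)
    (hker : Nat.card π.ker = 3)
    (lift : ↥(alternatingGroup (Fin 6)) → V)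
    (hlift : ∀ x, orderOf x = 2 → π (lift x) = x ∧ orderOf (lift x) = 2)
    {k : ℕ} (g : Fin k → ↥(alternatingGroup (Fin 6)))
    (hg : ∀ i, orderOf (g i) = 2)
    (hprod : (List.ofFn g).prod = 1)
    (t : ↥(alternatingGroup (Fin 6))) :
    (List.ofFn fun i => lift (t⁻¹ * g i * t)).prod
      = (List.ofFn fun i => lift (g i)).prod := by
  -- uniqueness of order-2 lifts
  have huniq : ∀ a b : V, π a = π b → orderOf a = 2 → orderOf b = 2 → a = b := by
    intro a b hab ha hb
    have hz : a⁻¹ * b ∈ π.ker := by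
      simp [MonoidHom.mem_ker, hab]
    have hzc := hcent hz
    have ha2 : a * a = 1 := by
      have := pow_orderOf_eq_one a; rw [ha] at this; rwa [pow_two] at this
    have hb2 : b * b = 1 := by
      have := pow_orderOf_eq_one b; rw [hb] at this; rwa [pow_two] at this
    set z := a⁻¹ * b with hzdef
    have hzsq : z * z = 1 := by
      have hcomm : a * z = z * a := (Subgroup.mem_center_iff.mp hzc) a
      have h1 : a * z * (a * z) = 1 := by
        have : a * z = b := by rw [hzdef]; group
        rw [this, hb2]
      have h2 : a * a * (z * z) = 1 := by
        calc a * a * (z * z) = a * (a * z) * z := by group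
        _ = a * (z * a) * z := by rw [hcomm]
        _ = a * z * (a * z) := by group
        _ = 1 := h1
      rwa [ha2, one_mul] at h2
    have hdvd2 : orderOf z ∣ 2 := orderOf_dvd_of_pow_eq_one (by rwa [pow_two])
    have hdvd3 : orderOf z ∣ 3 := by
      have : orderOf (⟨z, hz⟩ : π.ker) ∣ Nat.card π.ker := orderOf_dvd_natCard _
      rwa [Subgroup.orderOf_mk, hker] at this
    have : orderOf z ∣ 1 := Nat.dvd_gcd hdvd2 hdvd3
    have hz1 : z = 1 := orderOf_eq_one_iff.mp (Nat.eq_one_of_dvd_one this)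
    have : a⁻¹ * b = 1 := hz1
    calc a = a * (a⁻¹ * b) := by rw [this, mul_one]
    _ = b := by group
  obtain ⟨τ, hτ⟩ := hsurj t
  have key : ∀ i, lift (t⁻¹ * g i * t) = τ⁻¹ * lift (g i) * τ := by
    intro i
    have hord : orderOf (t⁻¹ * g i * t) = 2 := by rw [conj_orderOf t (g i), hg]
    obtain ⟨hπi, hoi⟩ := hlift _ (hg i)
    have h1 := hlift _ hord
    refine huniq _ _ ?_ h1.2 ?_
    · rw [h1.1, map_mul, map_mul, map_inv, hτ, hπi]
    · rw [conj_orderOf τ (lift (g i)), hoi]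
  have hfun : (fun i => lift (t⁻¹ * g i * t)) = fun i => τ⁻¹ * lift (g i) * τ :=
    funext key
  rw [hfun]
  -- conjugation of the product via the conjugation monoid hom
  set φ : V →* V := (MulAut.conj τ⁻¹).toMonoidHom with hφ
  have hφa : ∀ v : V, φ v = τ⁻¹ * v * τ := by
    intro v; simp [hφ, MulAut.conj_apply, mul_assoc]
  have hmap : (List.ofFn fun i => τ⁻¹ * lift (g i) * τ).prod
      = τ⁻¹ * (List.ofFn fun i => lift (g i)).prod * τ := by
    simp only [← hφa]
    rw [← Function.comp_def φ fun i => lift (g i), ← List.map_ofFn,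
      ← map_list_prod φ, hφa]
  rw [hmap]
  -- the product lies in the kernel, hence is central
  have hπP : π (List.ofFn fun i => lift (g i)).prod = 1 := by
    rw [map_list_prod π, List.map_ofFn]
    have : (π ∘ fun i => lift (g i)) = g := by
      funext i; exact (hlift _ (hg i)).1
    rw [this, hprod]
  have hc : (List.ofFn fun i => lift (g i)).prod ∈ Subgroup.center V :=
    hcent hπP
  have := (Subgroup.mem_center_iff.mp hc) τ
  calc τ⁻¹ * (List.ofFn fun i => lift (g i)).prod * τ
      = τ⁻¹ * ((List.ofFn fun i => lift (g i)).prod * τ) := by group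
  _ = τ⁻¹ * (τ * (List.ofFn fun i => lift (g i)).prod) := by rw [← this]
  _ = (List.ofFn fun i => lift (g i)).prod := by group
end

section
/- Let V be a group and π : V → A6 a surjective group homomorphism whose kernel is a central subgroup of V of order 3, and for a tuple of order-2 elements of A6 let γ denote the product in V of their canonical order-2 lifts. Let (g_1,…,g_k) be a tuple of order-2 elements of A6 with g_1 g_2 ⋯ g_k = 1 and Fix(g_1) = Fix(g_2). If g_1 = g_2 (2-reduction), then γ(g_3,…,g_k) = γ(g_1,…,g_k). If g_1 ≠ g_2 (1-reduction), then g_1 g_2 has order 2 and γ(g_1 g_2, g_3,…,g_k) = γ(g_1,…,g_k). -/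
lemma mul_self_of_orderOf_two {G : Type*} [Group G] {x : G} (h : orderOf x = 2) :
    x * x = 1 := by
  have := pow_orderOf_eq_one x
  rwa [h, pow_two] at this

lemma support_card_four {g : Equiv.Perm (Fin 6)} (hg : g ∈ alternatingGroup (Fin 6))
    (ho : orderOf g = 2) : g.support.card = 4 := by
  have hne : g ≠ 1 := by
    intro h; rw [h] at ho; simp at ho
  have hcyc : ∀ n ∈ g.cycleType, n = 2 := by
    intro n hn
    have h2 : 2 ≤ n := Equiv.Perm.two_le_of_mem_cycleType hn
    have hd : n ∣ 2 := by
      rw [← ho, ← Equiv.Perm.lcm_cycleType]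
      exact Multiset.dvd_lcm hn
    have := Nat.le_of_dvd (by norm_num) hd
    omega
  set m := g.cycleType.card with hm
  have hrep : g.cycleType = Multiset.replicate m 2 :=
    Multiset.eq_replicate.mpr ⟨rfl, hcyc⟩
  have hsum : g.cycleType.sum = 2 * m := by
    rw [hrep, Multiset.sum_replicate, smul_eq_mul]; ring
  have hsign : Equiv.Perm.sign g = 1 := Equiv.Perm.mem_alternatingGroup.mp hg
  have hsign2 : ((-1 : ℤˣ)) ^ (2 * m + m) = 1 := by
    rw [← hsum, hm, ← Equiv.Perm.sign_of_cycleType]; exact hsign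
  have heven : Even (2 * m + m) := by
    by_contra hodd
    rw [(Odd.neg_one_pow (Nat.not_even_iff_odd.mp hodd))] at hsign2
    exact (by decide : (-1 : ℤˣ) ≠ 1) hsign2
  have hmeven : m % 2 = 0 := by
    obtain ⟨k, hk⟩ := heven; omega
  have hm0 : m ≠ 0 := by
    intro h0
    rw [Multiset.card_eq_zero] at h0
    exact hne (Equiv.Perm.cycleType_eq_zero.mp h0)
  have hle : g.support.card ≤ 6 := by
    have := Finset.card_le_univ g.support
    simpa using this
  have hsum' : g.support.card = 2 * m := by rw [← Equiv.Perm.sum_cycleType, hsum]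
  omega

lemma commute_of_same_support {σ τ : Equiv.Perm (Fin 6)}
    (hσ : σ ∈ alternatingGroup (Fin 6)) (hτ : τ ∈ alternatingGroup (Fin 6))
    (hoσ : orderOf σ = 2) (hoτ : orderOf τ = 2)
    (hsupp : σ.support = τ.support) : Commute σ τ := by
  have hσ2 : ∀ x, σ (σ x) = x := fun x => by
    have h := mul_self_of_orderOf_two hoσ
    calc σ (σ x) = (σ * σ) x := rfl
      _ = x := by rw [h]; rfl
  have hτ2 : ∀ x, τ (τ x) = x := fun x => by
    have h := mul_self_of_orderOf_two hoτ
    calc τ (τ x) = (τ * τ) x := rfl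
      _ = x := by rw [h]; rfl
  have hcard : σ.support.card = 4 := support_card_four hσ hoσ
  show σ * τ = τ * σ
  refine Equiv.ext fun x => ?_
  simp only [Equiv.Perm.mul_apply]
  by_cases hx : x ∈ σ.support
  · by_cases heq : σ x = τ x
    · rw [← heq, hσ2, heq, hτ2]
    · -- x, σ x, τ x distinct elements of support
      have hσx : σ x ≠ x := Equiv.Perm.mem_support.mp hx
      have hτx : τ x ≠ x := Equiv.Perm.mem_support.mp (hsupp ▸ hx)
      have hmemσx : σ x ∈ σ.support := by
        rw [Equiv.Perm.mem_support, hσ2]; exact fun h => hσx h.symm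
      have hmemτx : τ x ∈ σ.support := by
        rw [hsupp, Equiv.Perm.mem_support, hτ2]; exact fun h => hτx h.symm
      -- σ (τ x) ∈ support \ {x, σ x, τ x}
      have ha1 : σ (τ x) ∈ σ.support := by
        rw [Equiv.Perm.mem_support, hσ2]
        exact fun h => (Equiv.Perm.mem_support.mp hmemτx) h.symm
      have ha2 : σ (τ x) ≠ x := by
        intro h
        have : τ x = σ x := by rw [← hσ2 (τ x), h]
        exact heq this.symm
      have ha3 : σ (τ x) ≠ σ x := by
        intro h; exact hτx (σ.injective h)
      have ha4 : σ (τ x) ≠ τ x := Equiv.Perm.mem_support.mp hmemτx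
      have hb1 : τ (σ x) ∈ σ.support := by
        rw [hsupp, Equiv.Perm.mem_support, hτ2]
        intro h
        exact (Equiv.Perm.mem_support.mp (hsupp ▸ hmemσx)) h.symm
      have hb2 : τ (σ x) ≠ x := by
        intro h
        have : σ x = τ x := by rw [← hτ2 (σ x), h]
        exact heq this
      have hb3 : τ (σ x) ≠ σ x := Equiv.Perm.mem_support.mp (hsupp ▸ hmemσx)
      have hb4 : τ (σ x) ≠ τ x := by
        intro h; exact hσx (τ.injective h)
      -- the complement of {x, σ x, τ x} in the support has exactly one element
      have hsub : ({x, σ x, τ x} : Finset (Fin 6)) ⊆ σ.support := by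
        intro y hy
        simp only [Finset.mem_insert, Finset.mem_singleton] at hy
        rcases hy with rfl | rfl | rfl
        · exact hx
        · exact hmemσx
        · exact hmemτx
      have hx1 : x ∉ ({σ x, τ x} : Finset (Fin 6)) := by
        simp only [Finset.mem_insert, Finset.mem_singleton]
        push_neg
        exact ⟨fun h => hσx h.symm, fun h => hτx h.symm⟩
      have hc3 : ({x, σ x, τ x} : Finset (Fin 6)).card = 3 := by
        rw [Finset.card_insert_of_notMem hx1,
          Finset.card_insert_of_notMem (by simpa using heq), Finset.card_singleton]
      have hone : (σ.support \ {x, σ x, τ x}).card = 1 := by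
        rw [Finset.card_sdiff_of_subset hsub, hcard, hc3]
      have hmema : σ (τ x) ∈ σ.support \ ({x, σ x, τ x} : Finset (Fin 6)) := by
        rw [Finset.mem_sdiff]
        refine ⟨ha1, ?_⟩
        simp [ha2, ha3, ha4]
      have hmemb : τ (σ x) ∈ σ.support \ ({x, σ x, τ x} : Finset (Fin 6)) := by
        rw [Finset.mem_sdiff]
        refine ⟨hb1, ?_⟩
        simp [hb2, hb3, hb4]
      exact Finset.card_le_one.mp (le_of_eq hone) _ hmema _ hmemb
  · have hfx : σ x = x := by
      by_contra h; exact hx (Equiv.Perm.mem_support.mpr h)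
    have hgx : τ x = x := by
      by_contra h; exact hx (hsupp ▸ Equiv.Perm.mem_support.mpr h)
    simp [hfx, hgx]

lemma ker_elem_eq_one {V : Type*} [Group V] (π : V →* ↥(alternatingGroup (Fin 6)))
    (hker : Nat.card π.ker = 3) {c : V} (hc : c ∈ π.ker) (h2 : c * c = 1) : c = 1 := by
  have h3 : c ^ 3 = 1 := by
    have hd := orderOf_dvd_natCard (⟨c, hc⟩ : π.ker)
    rw [hker] at hd
    have := orderOf_dvd_iff_pow_eq_one.mp hd
    have := congrArg (Subtype.val) this
    simpa using this
  calc c = c ^ 3 * (c * c)⁻¹ := by group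
    _ = 1 := by rw [h2, h3]; simp

lemma lift_sq {V : Type*} [Group V] (π : V →* ↥(alternatingGroup (Fin 6)))
    (hcent : π.ker ≤ Subgroup.center V) (hker : Nat.card π.ker = 3)
    {x y : V} (hx2 : x * x = 1) (hy2 : y * y = 1)
    (hxy : π x * π y * (π x * π y) = 1) : x * y * (x * y) = 1 := by
  set c := x * y * (x * y) with hc
  have hcker : c ∈ π.ker := by
    rw [MonoidHom.mem_ker, hc]
    simp only [map_mul]
    exact hxy
  have hcc := hcent hcker
  have hx : x⁻¹ = x := inv_eq_iff_mul_eq_one.mpr hx2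
  have hy : y⁻¹ = y := inv_eq_iff_mul_eq_one.mpr hy2
  have e1 : x * c * x = y * x * (y * x) := by
    calc x * c * x = x * x * (y * x * (y * x)) := by rw [hc]; group
      _ = y * x * (y * x) := by rw [hx2, one_mul]
  have e2 : c⁻¹ = y * x * (y * x) := by
    rw [hc, show (x * y * (x * y))⁻¹ = y⁻¹ * x⁻¹ * (y⁻¹ * x⁻¹) from by group, hx, hy]
  have e3 : x * c * x = c := by
    calc x * c * x = c * x * x := by rw [Subgroup.mem_center_iff.mp hcc x]
      _ = c * (x * x) := by rw [mul_assoc]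
      _ = c := by rw [hx2, mul_one]
  have hcinv : c = c⁻¹ := by rw [e2, ← e1, e3]
  have h2 : c * c = 1 := by nth_rewrite 2 [hcinv]; simp
  exact ker_elem_eq_one π hker hcker h2


/-- Behaviour of the lifting invariant `γ` (product of canonical order-2 lifts
to a central triple cover `V` of `A₆`) under `2`-reductions and `1`-reductions:
given order-2 elements `g₁, g₂` with the same fixed points heading a tuple of
order-2 elements with product `1`, if `g₁ = g₂` then dropping them preserves
`γ`; if `g₁ ≠ g₂` then `g₁ g₂` has order `2` and replacing the pair by the
product preserves `γ`. -/
theorem stmt_14 {V : Type*} [Group V] (π : V →* ↥(alternatingGroup (Fin 6)))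
    (hsurj : Function.Surjective π)
    (hcent : π.ker ≤ Subgroup.center V)
    (hker : Nat.card π.ker = 3)
    (lift : ↥(alternatingGroup (Fin 6)) → V)
    (hlift : ∀ x, orderOf x = 2 → π (lift x) = x ∧ orderOf (lift x) = 2)
    (g₁ g₂ : ↥(alternatingGroup (Fin 6))) (rest : List ↥(alternatingGroup (Fin 6)))
    (ho₁ : orderOf g₁ = 2) (ho₂ : orderOf g₂ = 2)
    (hor : ∀ x ∈ rest, orderOf x = 2)
    (hprod : (g₁ :: g₂ :: rest).prod = 1)
    (hfix : FixedPts (g₁ : Equiv.Perm (Fin 6)) = FixedPts (g₂ : Equiv.Perm (Fin 6))) :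
    (g₁ = g₂ → (rest.map lift).prod = ((g₁ :: g₂ :: rest).map lift).prod) ∧
    (g₁ ≠ g₂ → orderOf (g₁ * g₂) = 2 ∧
      ((g₁ * g₂ :: rest).map lift).prod = ((g₁ :: g₂ :: rest).map lift).prod) := by
  have sq₁ : g₁ * g₁ = 1 := mul_self_of_orderOf_two ho₁
  have sq₂ : g₂ * g₂ = 1 := mul_self_of_orderOf_two ho₂
  constructor
  · rintro rfl
    simp only [List.map_cons, List.prod_cons]
    rw [← mul_assoc, mul_self_of_orderOf_two (hlift g₁ ho₁).2, one_mul]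
  · intro hne
    have hsupp : (g₁ : Equiv.Perm (Fin 6)).support = (g₂ : Equiv.Perm (Fin 6)).support := by
      ext a
      have h := Set.ext_iff.mp hfix a
      simp only [FixedPts, Set.mem_setOf_eq] at h
      simp only [Equiv.Perm.mem_support]
      exact not_congr h
    have ho₁' : orderOf (g₁ : Equiv.Perm (Fin 6)) = 2 := by
      rw [← ho₁]
      exact orderOf_injective (alternatingGroup (Fin 6)).subtype
        (alternatingGroup (Fin 6)).subtype_injective g₁
    have ho₂' : orderOf (g₂ : Equiv.Perm (Fin 6)) = 2 := by
      rw [← ho₂]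
      exact orderOf_injective (alternatingGroup (Fin 6)).subtype
        (alternatingGroup (Fin 6)).subtype_injective g₂
    have hcomm : (g₁ : Equiv.Perm (Fin 6)) * g₂ = (g₂ : Equiv.Perm (Fin 6)) * g₁ :=
      commute_of_same_support g₁.2 g₂.2 ho₁' ho₂' hsupp
    have hcomm' : g₁ * g₂ = g₂ * g₁ := Subtype.ext (by push_cast; exact hcomm)
    have hsq : g₁ * g₂ * (g₁ * g₂) = 1 := by
      calc g₁ * g₂ * (g₁ * g₂) = g₁ * (g₂ * g₁) * g₂ := by group
        _ = g₁ * (g₁ * g₂) * g₂ := by rw [← hcomm']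
        _ = g₁ * g₁ * (g₂ * g₂) := by group
        _ = 1 := by rw [sq₁, sq₂, one_mul]
    have hne1 : g₁ * g₂ ≠ 1 := by
      intro h
      apply hne
      have h2 : g₂⁻¹ = g₂ := inv_eq_iff_mul_eq_one.mpr sq₂
      rw [eq_inv_of_mul_eq_one_left h, h2]
    haveI : Fact (Nat.Prime 2) := ⟨Nat.prime_two⟩
    have hord : orderOf (g₁ * g₂) = 2 := orderOf_eq_prime (by rw [pow_two]; exact hsq) hne1
    refine ⟨hord, ?_⟩
    obtain ⟨hπ1, hl1⟩ := hlift g₁ ho₁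
    obtain ⟨hπ2, hl2⟩ := hlift g₂ ho₂
    obtain ⟨hπ12, hl12⟩ := hlift (g₁ * g₂) hord
    set z := lift g₁ * lift g₂ with hzz
    have hz : z * z = 1 :=
      lift_sq π hcent hker (mul_self_of_orderOf_two hl1) (mul_self_of_orderOf_two hl2)
        (by rw [hπ1, hπ2]; exact hsq)
    have hd : lift (g₁ * g₂) * z⁻¹ ∈ π.ker := by
      rw [MonoidHom.mem_ker, map_mul, map_inv, hzz, map_mul, hπ12, hπ1, hπ2]
      group
    set d := lift (g₁ * g₂) * z⁻¹ with hdd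
    have hdc := hcent hd
    have hcd := Subgroup.mem_center_iff.mp hdc
    have hL : lift (g₁ * g₂) = d * z := by rw [hdd]; group
    have hLsq : lift (g₁ * g₂) * lift (g₁ * g₂) = 1 := mul_self_of_orderOf_two hl12
    have hd2 : d * d = 1 := by
      have key : d * z * (d * z) = 1 := by rw [← hL]; exact hLsq
      calc d * d = d * d * (z * z) := by rw [hz, mul_one]
        _ = d * (d * z) * z := by group
        _ = d * (z * d) * z := by rw [hcd z]
        _ = d * z * (d * z) := by group
        _ = 1 := key
    have hd1 : d = 1 := ker_elem_eq_one π hker hd hd2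
    have hLz : lift (g₁ * g₂) = z := by rw [hL, hd1, one_mul]
    simp only [List.map_cons, List.prod_cons]
    rw [hLz, hzz, mul_assoc]
end

section
/- Let G be a finite group equipped with a linear order ≤ on its elements. Then every k-tuple (g_1,…,g_k) of elements of G is Hurwitz-equivalent to a tuple (h_1,…,h_k) that is nondecreasing, i.e., h_1 ≤ h_2 ≤ ⋯ ≤ h_k. -/
/-- In a finite group with a linear order, every `k`-tuple is
Hurwitz-equivalent to a nondecreasing one. -/
theorem stmt_19 {G : Type*} [Group G] [Finite G] [LinearOrder G]
    (k : ℕ) (g : Fin k → G) :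
    ∃ h : Fin k → G, HurwitzEquiv g h ∧ Monotone h := by
  classical
  letI : LinearOrder (Lex (Fin k → G)) :=
    @Pi.Lex.linearOrder (Fin k) (fun _ => G) inferInstance
      (inferInstance : WellFoundedLT (Fin k)) inferInstance
  set S : Set (Fin k → G) := {h | HurwitzEquiv g h} with hS
  have hfin : S.Finite := Set.toFinite S
  have hne : (hfin.toFinset).Nonempty := ⟨g, by simp [hS, HurwitzEquiv]; exact Relation.EqvGen.refl g⟩
  obtain ⟨h, hhS, hmin⟩ := Finset.exists_min_image hfin.toFinset (fun x => toLex x : (Fin k → G) → Lex (Fin k → G)) hne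
  rw [Set.Finite.mem_toFinset] at hhS
  refine ⟨h, hhS, ?_⟩
  -- adjacent condition
  have key : ∀ (i : ℕ) (hi : i + 1 < k), h ⟨i, Nat.lt_of_succ_lt hi⟩ ≤ h ⟨i + 1, hi⟩ := by
    intro i hi
    by_contra hlt
    push_neg at hlt
    set a := h ⟨i, Nat.lt_of_succ_lt hi⟩
    set b := h ⟨i + 1, hi⟩
    set h' : Fin k → G := fun j => if (j : ℕ) = i then b else if (j : ℕ) = i + 1 then b⁻¹ * a * b else h j with hh'
    have hmove : HurwitzMove h h' := by
      refine ⟨i, hi, ?_, ?_, ?_⟩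
      · simp [hh']; rfl
      · simp [hh']; rfl
      · intro j hj1 hj2; simp [hh', hj1, hj2]
    have hh'S : h' ∈ hfin.toFinset := by
      rw [Set.Finite.mem_toFinset]
      exact Relation.EqvGen.trans _ _ _ hhS (Relation.EqvGen.rel _ _ hmove)
    have := hmin h' hh'S
    have hlex : toLex h' < toLex h := by
      refine ⟨⟨i, Nat.lt_of_succ_lt hi⟩, ?_, ?_⟩
      · intro j hj
        have hj' : (j : ℕ) < i := hj
        simp [hh', Nat.ne_of_lt hj', Nat.ne_of_lt (Nat.lt_succ_of_lt hj')]
      · simpa [hh'] using hlt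
    exact absurd this (not_le_of_gt hlex)
  -- monotone from adjacent
  intro x y hxy
  obtain ⟨x, hx⟩ := x
  obtain ⟨y, hy⟩ := y
  simp only [Fin.mk_le_mk] at hxy
  induction y, hxy using Nat.le_induction with
  | base => exact le_rfl
  | succ m hm ih =>
    exact le_trans (ih (Nat.lt_of_succ_lt hy)) (key m hy)
end
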